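/- arXiv:1702.08683 — 2 statements merged into one kernel-verified Lean document; each statement's English description precedes it below -/
import Mathlib

section
/- (Riesz-type lemma) Let G : ℝ^N → ℝ be an admissible G-function and I ⊂ ℝ a bounded nondegenerate interval. Suppose u_n, u ∈ L^G(I,ℝ^N), u_n(t) → u(t) for almost every t ∈ I, and R_G(u_n) → R_G(u). Then ‖u_n − u‖_G → 0. -/
open MeasureTheory Filter Set

noncomputable section

abbrev Euc (N : ℕ) := EuclideanSpace ℝ (Fin N)

/-- Admissible G-function: (G1)-(G6). -/
def IsGFunction {N : ℕ} (G : Euc N → ℝ) : Prop :=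
  G 0 = 0 ∧
  ConvexOn ℝ Set.univ G ∧
  (∀ x, G (-x) = G x) ∧
  (∀ C : ℝ, ∃ R : ℝ, ∀ x : Euc N, R ≤ ‖x‖ → C * ‖x‖ ≤ G x) ∧
  (∃ K₁ : ℝ, 2 ≤ K₁ ∧ ∃ M₁ : ℝ, 0 < M₁ ∧ ∀ x : Euc N, M₁ ≤ ‖x‖ → G ((2:ℝ) • x) ≤ K₁ * G x) ∧
  (∃ K₂ : ℝ, 1 ≤ K₂ ∧ ∃ M₂ : ℝ, 0 < M₂ ∧ ∀ x : Euc N, M₂ ≤ ‖x‖ → G x ≤ (1/(2*K₂)) * G (K₂ • x))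

/-- Membership in the anisotropic Orlicz space L^G(I, ℝ^N). -/
def MemLG {N : ℕ} (G : Euc N → ℝ) (I : Set ℝ) (u : ℝ → Euc N) : Prop :=
  AEStronglyMeasurable u (volume.restrict I) ∧ IntegrableOn (fun t => G (u t)) I

/-- Luxemburg norm. -/
def luxNorm {N : ℕ} (G : Euc N → ℝ) (I : Set ℝ) (u : ℝ → Euc N) : ℝ :=
  sInf {α : ℝ | 0 < α ∧ (∫ t in I, G (α⁻¹ • u t)) ≤ 1}

/-- Modular. -/
def modular {N : ℕ} (G : Euc N → ℝ) (I : Set ℝ) (u : ℝ → Euc N) : ℝ :=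
  ∫ t in I, G (u t)

/-- Fenchel conjugate. -/
def fenchelConj {N : ℕ} (G : Euc N → ℝ) (y : Euc N) : ℝ :=
  ⨆ x : Euc N, ((inner ℝ x y : ℝ) - G x)


section Aux

variable {N : ℕ} {G : Euc N → ℝ}


lemma G_nonneg (h0 : G 0 = 0) (hc : ConvexOn ℝ Set.univ G) (he : ∀ x, G (-x) = G x)
    (x : Euc N) : 0 ≤ G x := by
  have := hc.2 (mem_univ x) (mem_univ (-x)) (by norm_num : (0:ℝ) ≤ 1/2)
    (by norm_num : (0:ℝ) ≤ 1/2) (by norm_num)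
  rw [smul_neg, add_neg_cancel, h0, he] at this
  simp only [smul_eq_mul] at this
  linarith

lemma G_ray_mono (h0 : G 0 = 0) (hc : ConvexOn ℝ Set.univ G) (he : ∀ x, G (-x) = G x)
    (x : Euc N) {s t : ℝ} (hs : 0 ≤ s) (hst : s ≤ t) : G (s • x) ≤ G (t • x) := by
  rcases eq_or_lt_of_le (hs.trans hst) with ht | ht
  · have : s = 0 := le_antisymm (hst.trans ht.symm.le) hs
    rw [this, ← ht]
  · have h1 : s / t ≤ 1 := (div_le_one ht).2 hst
    have h2 : 0 ≤ s / t := div_nonneg hs ht.le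
    have h3 : (0:ℝ) ≤ 1 - s / t := by linarith
    have h4 : s / t + (1 - s / t) = 1 := by ring
    have := hc.2 (mem_univ (t • x)) (mem_univ (0 : Euc N)) h2 h3 h4
    simp only [smul_eq_mul, smul_zero, add_zero, smul_smul] at this
    rw [div_mul_cancel₀ _ ht.ne', h0, mul_zero, add_zero] at this
    calc G (s • x) ≤ s / t * G (t • x) := this
      _ ≤ 1 * G (t • x) := by
          exact mul_le_mul_of_nonneg_right h1 (G_nonneg h0 hc he _)
      _ = G (t • x) := one_mul _

lemma G_cont (hc : ConvexOn ℝ Set.univ G) : Continuous G := by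
  rw [← continuousOn_univ]
  exact hc.continuousOn isOpen_univ

/-- Δ₂ for arbitrary scalar: ∃ A B ≥ 0 with G(c•x) ≤ A G x + B. -/
lemma G_delta2 (h0 : G 0 = 0) (hc : ConvexOn ℝ Set.univ G) (he : ∀ x, G (-x) = G x)
    (hd : ∃ K₁ : ℝ, 2 ≤ K₁ ∧ ∃ M₁ : ℝ, 0 < M₁ ∧ ∀ x : Euc N, M₁ ≤ ‖x‖ → G ((2:ℝ) • x) ≤ K₁ * G x)
    (c : ℝ) :
    ∃ A B : ℝ, 0 ≤ A ∧ 0 ≤ B ∧ ∀ x : Euc N, G (c • x) ≤ A * G x + B := by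
  obtain ⟨K₁, hK₁, M₁, hM₁, hΔ⟩ := hd
  -- bound on the ball of radius 2 M₁
  obtain ⟨B', hB'⟩ : ∃ B' : ℝ, ∀ y ∈ Metric.closedBall (0 : Euc N) (2 * M₁), G y ≤ B' := by
    obtain ⟨z, _, hz⟩ := (isCompact_closedBall (0 : Euc N) (2 * M₁)).exists_isMaxOn
      ⟨0, Metric.mem_closedBall_self (by positivity)⟩ (G_cont hc).continuousOn
    exact ⟨G z, fun y hy => hz hy⟩
  have hB'0 : 0 ≤ B' := le_trans (G_nonneg h0 hc he 0)
    (hB' 0 (Metric.mem_closedBall_self (by positivity)))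
  -- step: doubling with additive constant, for all x
  have step : ∀ x : Euc N, G ((2:ℝ) • x) ≤ K₁ * G x + B' := by
    intro x
    rcases le_or_gt M₁ ‖x‖ with h | h
    · have := hΔ x h
      nlinarith [G_nonneg h0 hc he x]
    · have : G ((2:ℝ) • x) ≤ B' := by
        apply hB'
        simp only [Metric.mem_closedBall, dist_zero_right, norm_smul]
        rw [Real.norm_ofNat]
        nlinarith
      nlinarith [G_nonneg h0 hc he x, hK₁]
  -- induction: powers of 2
  have pow2 : ∀ m : ℕ, ∃ A B : ℝ, 0 ≤ A ∧ 0 ≤ B ∧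
      ∀ x : Euc N, G (((2:ℝ) ^ m) • x) ≤ A * G x + B := by
    intro m
    induction m with
    | zero => exact ⟨1, 0, zero_le_one, le_refl 0, fun x => by simp⟩
    | succ m ih =>
      obtain ⟨A, B, hA, hB, hAB⟩ := ih
      refine ⟨K₁ * A, K₁ * B + B', by positivity, by positivity, fun x => ?_⟩
      have h1 : G (((2:ℝ) ^ (m+1)) • x) = G ((2:ℝ) • (((2:ℝ) ^ m) • x)) := by
        rw [smul_smul]; ring_nf
      rw [h1]
      calc G ((2:ℝ) • (((2:ℝ) ^ m) • x)) ≤ K₁ * G (((2:ℝ) ^ m) • x) + B' := step _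
        _ ≤ K₁ * (A * G x + B) + B' := by nlinarith [hAB x, hK₁]
        _ = K₁ * A * G x + (K₁ * B + B') := by ring
  rcases le_or_gt c 0 with hcneg | hcpos
  · -- then for c ≤ 0, G(c•x) = G(|c|•x) ≤ G(?) use even; handle via -c ≥ 0 case... 
    -- simplest: G(c•x) = G((-c)•x) by evenness
    obtain ⟨m, hm⟩ := pow_unbounded_of_one_lt (-c) (by norm_num : (1:ℝ) < 2)
    obtain ⟨A, B, hA, hB, hAB⟩ := pow2 m
    refine ⟨A, B, hA, hB, fun x => ?_⟩
    have hev : G (c • x) = G ((-c) • x) := by rw [neg_smul, he]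
    rw [hev]
    exact le_trans (G_ray_mono h0 hc he x (by linarith) hm.le) (hAB x)
  · obtain ⟨m, hm⟩ := pow_unbounded_of_one_lt c (by norm_num : (1:ℝ) < 2)
    obtain ⟨A, B, hA, hB, hAB⟩ := pow2 m
    exact ⟨A, B, hA, hB, fun x =>
      le_trans (G_ray_mono h0 hc he x hcpos.le hm.le) (hAB x)⟩


lemma key_tendsto (h0 : G 0 = 0) (hc : ConvexOn ℝ Set.univ G) (he : ∀ x, G (-x) = G x)
    (hd : ∃ K₁ : ℝ, 2 ≤ K₁ ∧ ∃ M₁ : ℝ, 0 < M₁ ∧ ∀ x : Euc N, M₁ ≤ ‖x‖ → G ((2:ℝ) • x) ≤ K₁ * G x)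
    (I : Set ℝ) (hfin : volume I < ⊤)
    (u : ℕ → ℝ → Euc N) (w : ℝ → Euc N)
    (humeas : ∀ n, AEStronglyMeasurable (u n) (volume.restrict I))
    (hwmeas : AEStronglyMeasurable w (volume.restrict I))
    (huint : ∀ n, IntegrableOn (fun t => G (u n t)) I)
    (hwint : IntegrableOn (fun t => G (w t)) I)
    (hae : ∀ᵐ t ∂(volume.restrict I), Tendsto (fun n => u n t) atTop (nhds (w t)))
    (hmod : Tendsto (fun n => ∫ t in I, G (u n t)) atTop (nhds (∫ t in I, G (w t))))
    (c : ℝ) :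
    Tendsto (fun n => ∫ t in I, G (c • (u n t - w t))) atTop (nhds 0) := by
  set μ := volume.restrict I with hμdef
  haveI : IsFiniteMeasure μ := ⟨by
    rw [Measure.restrict_apply_univ]; exact hfin⟩
  have hnn := G_nonneg h0 hc he
  have hcont := G_cont hc
  obtain ⟨A, B, hA, hB, hAB⟩ := G_delta2 h0 hc he hd (2 * c)
  set f : ℕ → ℝ → ℝ := fun n t => G (c • (u n t - w t)) with hfdef
  set g : ℕ → ℝ → ℝ := fun n t => A / 2 * G (u n t) + A / 2 * G (w t) + B with hgdef
  set ghat : ℝ → ℝ := fun t => A * G (w t) + B with hghatdef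
  -- pointwise bound
  have hpt : ∀ n t, f n t ≤ g n t := by
    intro n t
    have h1 : c • (u n t - w t)
        = (1/2 : ℝ) • ((2*c) • u n t) + (1/2 : ℝ) • (-((2*c) • w t)) := by
      module
    have h2 := hc.2 (mem_univ ((2*c) • u n t)) (mem_univ (-((2*c) • w t)))
      (by norm_num : (0:ℝ) ≤ 1/2) (by norm_num : (0:ℝ) ≤ 1/2) (by norm_num)
    rw [← h1] at h2
    simp only [smul_eq_mul, he] at h2
    have h3 := hAB (u n t)
    have h4 := hAB (w t)
    simp only [hfdef, hgdef]
    linarith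
  have hf0 : ∀ n t, 0 ≤ f n t := fun n t => hnn _
  -- measurability and integrability
  have hfmeas : ∀ n, AEStronglyMeasurable (f n) μ := fun n =>
    hcont.comp_aestronglyMeasurable (((humeas n).sub hwmeas).const_smul c)
  have hgint : ∀ n, Integrable (g n) μ := fun n =>
    (((huint n).const_mul (A/2)).add (hwint.const_mul (A/2))).add (integrable_const B)
  have hfint : ∀ n, Integrable (f n) μ := by
    intro n
    refine (hgint n).mono' (hfmeas n) ?_
    filter_upwards with t
    rw [Real.norm_eq_abs, abs_of_nonneg (hf0 n t)]
    exact hpt n t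
  have hghatint : Integrable ghat μ := (hwint.const_mul A).add (integrable_const B)
  -- a.e. limits
  have hfae : ∀ᵐ t ∂μ, Tendsto (fun n => f n t) atTop (nhds 0) := by
    filter_upwards [hae] with t ht
    have h1 : Tendsto (fun n => c • (u n t - w t)) atTop (nhds (c • (w t - w t))) :=
      ((ht.sub tendsto_const_nhds)).const_smul c
    rw [sub_self, smul_zero] at h1
    have := (hcont.tendsto 0).comp h1
    rwa [h0] at this
  have hgae : ∀ᵐ t ∂μ, Tendsto (fun n => g n t) atTop (nhds (ghat t)) := by
    filter_upwards [hae] with t ht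
    have h1 : Tendsto (fun n => G (u n t)) atTop (nhds (G (w t))) :=
      (hcont.tendsto (w t)).comp ht
    have h2 : Tendsto (fun n => A / 2 * G (u n t) + A / 2 * G (w t) + B) atTop
        (nhds (A / 2 * G (w t) + A / 2 * G (w t) + B)) :=
      ((h1.const_mul (A/2)).add_const _).add_const _
    simp only [hgdef, hghatdef]
    convert h2 using 2
    ring
  -- integrals of g
  set L : ℝ := A * (∫ t in I, G (w t)) + B * (μ univ).toReal with hLdef
  have hbval : ∀ n, ∫ t, g n t ∂μ
      = A / 2 * (∫ t in I, G (u n t)) + (A / 2 * (∫ t in I, G (w t)) + B * (μ univ).toReal) := by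
    intro n
    have hi1 : Integrable (fun t => A / 2 * G (u n t)) μ := (huint n).const_mul (A/2)
    have hi2 : Integrable (fun t => A / 2 * G (w t)) μ := hwint.const_mul (A/2)
    have hi12 : Integrable (fun t => A / 2 * G (u n t) + A / 2 * G (w t)) μ := hi1.add hi2
    rw [show (g n) = fun t => (A / 2 * G (u n t) + A / 2 * G (w t)) + B from rfl,
      integral_add hi12 (integrable_const B),
      integral_add hi1 hi2,
      integral_const_mul, integral_const_mul, integral_const]
    simp only [smul_eq_mul, measureReal_def]
    ring
  have hghatval : ∫ t, ghat t ∂μ = L := by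
    have hi3 : Integrable (fun t => A * G (w t)) μ := hwint.const_mul A
    rw [show ghat = fun t => A * G (w t) + B from rfl,
      integral_add hi3 (integrable_const B), integral_const_mul, integral_const]
    simp only [smul_eq_mul, measureReal_def]
    ring
  have hb : Tendsto (fun n => ∫ t, g n t ∂μ) atTop (nhds L) := by
    simp only [hbval]
    have := (hmod.const_mul (A/2)).add_const (A / 2 * (∫ t in I, G (w t)) + B * (μ univ).toReal)
    convert this using 2
    rw [hLdef]; ring
  -- Fatou
  have hhint : ∀ n, Integrable (fun t => g n t - f n t) μ := fun n => (hgint n).sub (hfint n)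
  have hhmeas : ∀ n, AEMeasurable (fun t => ENNReal.ofReal (g n t - f n t)) μ := fun n =>
    ENNReal.measurable_ofReal.comp_aemeasurable (hhint n).aestronglyMeasurable.aemeasurable
  have fatou := lintegral_liminf_le' (u := atTop) hhmeas
  have hLHS : ∫⁻ t, liminf (fun n => ENNReal.ofReal (g n t - f n t)) atTop ∂μ
      = ∫⁻ t, ENNReal.ofReal (ghat t) ∂μ := by
    apply lintegral_congr_ae
    filter_upwards [hfae, hgae] with t htf htg
    have : Tendsto (fun n => ENNReal.ofReal (g n t - f n t)) atTop
        (nhds (ENNReal.ofReal (ghat t))) := by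
      have h1 : Tendsto (fun n => g n t - f n t) atTop (nhds (ghat t - 0)) := htg.sub htf
      rw [sub_zero] at h1
      exact ENNReal.tendsto_ofReal h1
    exact this.liminf_eq
  have hRHSeq : ∀ n, ∫⁻ t, ENNReal.ofReal (g n t - f n t) ∂μ
      = ENNReal.ofReal ((∫ t, g n t ∂μ) - ∫ t, f n t ∂μ) := by
    intro n
    rw [← ofReal_integral_eq_lintegral_ofReal (hhint n)
      (by filter_upwards with t; exact sub_nonneg.2 (hpt n t)),
      integral_sub (hgint n) (hfint n)]
  have hL2 : ∫⁻ t, ENNReal.ofReal (ghat t) ∂μ = ENNReal.ofReal L := by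
    rw [← ofReal_integral_eq_lintegral_ofReal hghatint
      (by filter_upwards with t; exact add_nonneg (mul_nonneg hA (hnn _)) hB), hghatval]
  rw [hLHS, hL2] at fatou
  simp only [hRHSeq] at fatou
  -- conclusion by contradiction
  set av : ℕ → ℝ := fun n => ∫ t, f n t ∂μ with havdef
  set bv : ℕ → ℝ := fun n => ∫ t, g n t ∂μ with hbvdef
  have hav0 : ∀ n, 0 ≤ av n := fun n => integral_nonneg (fun t => hf0 n t)
  have havb : ∀ n, av n ≤ bv n := fun n => integral_mono (hfint n) (hgint n) (hpt n)
  show Tendsto av atTop (nhds 0)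
  by_contra hcon
  rw [Metric.tendsto_atTop] at hcon
  push_neg at hcon
  obtain ⟨ε, hε, hfreq⟩ := hcon
  have hfreq' : ∃ᶠ n in atTop, ε ≤ av n := by
    rw [frequently_atTop]
    intro n0
    obtain ⟨n, hn1, hn2⟩ := hfreq n0
    refine ⟨n, hn1, ?_⟩
    rwa [Real.dist_eq, sub_zero, abs_of_nonneg (hav0 n)] at hn2
  -- ε ≤ L
  have hεL : ε ≤ L := by
    by_contra hLe
    push_neg at hLe
    obtain ⟨n, h1, h2⟩ := (hfreq'.and_eventually (hb.eventually (gt_mem_nhds hLe))).exists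
    exact absurd (h1.trans (havb n)) (not_le.2 h2)
  have hev2 : ∀ᶠ n in atTop, bv n ≤ L + ε / 2 :=
    hb.eventually (ge_mem_nhds (by linarith : L < L + ε / 2)) |>.mono (fun n h => h)
  have hfreq2 : ∃ᶠ n in atTop, ENNReal.ofReal (bv n - av n) ≤ ENNReal.ofReal (L - ε / 2) := by
    apply (hfreq'.and_eventually hev2).mono
    rintro n ⟨h1, h2⟩
    exact ENNReal.ofReal_le_ofReal (by linarith)
  have hlim : liminf (fun n => ENNReal.ofReal (bv n - av n)) atTop
      ≤ ENNReal.ofReal (L - ε / 2) := liminf_le_of_frequently_le' hfreq2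
  have : ENNReal.ofReal L ≤ ENNReal.ofReal (L - ε / 2) := le_trans fatou hlim
  rw [ENNReal.ofReal_le_ofReal_iff (by linarith)] at this
  linarith


end Aux

/-- Riesz-type lemma: a.e. convergence plus convergence of modulars
implies norm convergence. -/
theorem riesz_type_lemma {N : ℕ} (hN : 1 ≤ N) (G : Euc N → ℝ) (hG : IsGFunction G)
    (I : Set ℝ) (a b : ℝ) (hab : a < b) (hI1 : Ioo a b ⊆ I) (hI2 : I ⊆ Icc a b)
    (u : ℕ → ℝ → Euc N) (w : ℝ → Euc N)
    (hu : ∀ n, MemLG G I (u n)) (hw : MemLG G I w)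
    (hae : ∀ᵐ t ∂(volume.restrict I), Tendsto (fun n => u n t) atTop (nhds (w t)))
    (hmod : Tendsto (fun n => modular G I (u n)) atTop (nhds (modular G I w))) :
    Tendsto (fun n => luxNorm G I (fun t => u n t - w t)) atTop (nhds 0) := by
  obtain ⟨h0, hc, he, -, hΔ, -⟩ := hG
  have hfin : volume I < ⊤ :=
    lt_of_le_of_lt (measure_mono hI2) (by rw [Real.volume_Icc]; exact ENNReal.ofReal_lt_top)
  have key : ∀ c : ℝ, Tendsto (fun n => ∫ t in I, G (c • (u n t - w t))) atTop (nhds 0) :=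
    fun c => key_tendsto h0 hc he hΔ I hfin u w (fun n => (hu n).1) hw.1
      (fun n => (hu n).2) hw.2 hae hmod c
  rw [Metric.tendsto_atTop]
  intro ε hε
  have h2 := key (ε/2)⁻¹
  rw [Metric.tendsto_atTop] at h2
  obtain ⟨M, hM⟩ := h2 1 one_pos
  refine ⟨M, fun n hn => ?_⟩
  have hle : (∫ t in I, G ((ε/2)⁻¹ • (u n t - w t))) ≤ 1 := by
    have h5 := hM n hn
    rw [Real.dist_eq, sub_zero] at h5
    exact (le_abs_self _).trans h5.le
  have hmem : (ε/2) ∈ {α : ℝ | 0 < α ∧ (∫ t in I, G (α⁻¹ • (fun t => u n t - w t) t)) ≤ 1} :=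
    ⟨by positivity, hle⟩
  have h3 : luxNorm G I (fun t => u n t - w t) ≤ ε/2 :=
    csInf_le ⟨0, fun x hx => hx.1.le⟩ hmem
  have h4 : 0 ≤ luxNorm G I (fun t => u n t - w t) :=
    Real.sInf_nonneg (fun x hx => hx.1.le)
  rw [Real.dist_eq, sub_zero, abs_of_nonneg h4]
  linarith

end
end

section
/- (Poincaré inequality) Let G : ℝ^N → ℝ be an admissible G-function and I = [a,b] a compact nondegenerate interval. Let u : I → ℝ^N be absolutely continuous with u(t) = u(a) + ∫_a^t u̇(s) ds for all t ∈ I, where u̇ ∈ L^G(I,ℝ^N), and suppose u(a) = u(b) = 0. Then ‖u‖_G ≤ (b − a) ‖u̇‖_G. -/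
open MeasureTheory Filter Set

noncomputable section

/- ### Auxiliary lemmas -/

lemma gfun_nonneg {N : ℕ} {G : Euc N → ℝ} (hG : IsGFunction G) (x : Euc N) : 0 ≤ G x := by
  obtain ⟨h0, hconv, heven, -⟩ := hG
  have h := hconv.2 (mem_univ x) (mem_univ (-x))
    (by norm_num : (0:ℝ) ≤ 1/2) (by norm_num : (0:ℝ) ≤ 1/2) (by norm_num)
  have hx : (1/2 : ℝ) • x + (1/2 : ℝ) • (-x) = 0 := by
    rw [smul_neg]; abel
  rw [hx, h0, heven] at h
  simp only [smul_eq_mul] at h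
  linarith

lemma gfun_smul_le {N : ℕ} {G : Euc N → ℝ} (hG : IsGFunction G) {c : ℝ}
    (hc0 : 0 ≤ c) (hc1 : c ≤ 1) (x : Euc N) : G (c • x) ≤ c * G x := by
  have h := hG.2.1.2 (mem_univ x) (mem_univ (0 : Euc N)) hc0
    (by linarith : (0:ℝ) ≤ 1 - c) (by ring)
  simpa [hG.1] using h

lemma gfun_continuous {N : ℕ} {G : Euc N → ℝ} (hG : IsGFunction G) : Continuous G := by
  have h : ContinuousOn G (univ : Set (Euc N)) := hG.2.1.continuousOn isOpen_univ
  exact continuousOn_univ.mp h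

/-- Scaling invariance of integrability of `G ∘ (lam • du)`, using Δ₂. -/
lemma gfun_integrable_smul {N : ℕ} {G : Euc N → ℝ} (hG : IsGFunction G)
    {I : Set ℝ} (hIm : MeasurableSet I) (hIfin : volume I ≠ ⊤)
    {du : ℝ → Euc N} (hmeas : AEStronglyMeasurable du (volume.restrict I))
    (hfin : IntegrableOn (fun t => G (du t)) I) (lam : ℝ) :
    IntegrableOn (fun t => G (lam • du t)) I := by
  have hGcont := gfun_continuous hG
  have hGnn := gfun_nonneg hG
  obtain ⟨K₁, hK₁, M₁, hM₁, hΔ⟩ := hG.2.2.2.2.1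
  -- a uniform bound on the ball of radius 2M₁
  obtain ⟨C, hC⟩ : ∃ C : ℝ, ∀ y ∈ Metric.closedBall (0 : Euc N) (2*M₁), G y ≤ C := by
    obtain ⟨C, hC⟩ := ((isCompact_closedBall (0 : Euc N) (2*M₁)).bddAbove_image
      hGcont.continuousOn)
    exact ⟨C, fun y hy => hC ⟨y, hy, rfl⟩⟩
  have hC0 : 0 ≤ C := by
    have := hC 0 (by simp [Metric.mem_closedBall]; positivity)
    rw [hG.1] at this; exact this
  have hglob : ∀ x : Euc N, G ((2:ℝ) • x) ≤ K₁ * G x + C := by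
    intro x
    by_cases hx : M₁ ≤ ‖x‖
    · have := hΔ x hx
      nlinarith
    · push_neg at hx
      have h2x : (2:ℝ) • x ∈ Metric.closedBall (0 : Euc N) (2*M₁) := by
        simp only [Metric.mem_closedBall, dist_zero_right, norm_smul, Real.norm_ofNat]
        nlinarith
      have := hC _ h2x
      nlinarith [hGnn x]
  -- integrability for powers of 2
  have hpow : ∀ n : ℕ, IntegrableOn (fun t => G ((2:ℝ)^n • du t)) I := by
    intro n
    induction n with
    | zero => simpa using hfin
    | succ n ih =>
      have hmeas' : AEStronglyMeasurable (fun t => G ((2:ℝ)^(n+1) • du t))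
          (volume.restrict I) :=
        hGcont.comp_aestronglyMeasurable (hmeas.const_smul ((2:ℝ)^(n+1)))
      have hdom : IntegrableOn (fun t => K₁ * G ((2:ℝ)^n • du t) + C) I :=
        (ih.const_mul K₁).add (integrableOn_const hIfin)
      refine Integrable.mono hdom hmeas' (Filter.Eventually.of_forall fun t => ?_)
      have heq : (2:ℝ)^(n+1) • du t = (2:ℝ) • ((2:ℝ)^n • du t) := by
        rw [smul_smul]; ring_nf
      have hb := hglob ((2:ℝ)^n • du t)
      rw [← heq] at hb
      have h1 : 0 ≤ G ((2:ℝ)^(n+1) • du t) := hGnn _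
      have h2 : 0 ≤ K₁ * G ((2:ℝ)^n • du t) + C := by nlinarith [hGnn ((2:ℝ)^n • du t)]
      rw [Real.norm_eq_abs, Real.norm_eq_abs, abs_of_nonneg h1, abs_of_nonneg h2]
      exact hb
  -- general lam
  obtain ⟨n, hn⟩ : ∃ n : ℕ, |lam| ≤ (2:ℝ)^n := by
    obtain ⟨n, hn⟩ := pow_unbounded_of_one_lt |lam| (by norm_num : (1:ℝ) < 2)
    exact ⟨n, hn.le⟩
  have hmeas' : AEStronglyMeasurable (fun t => G (lam • du t)) (volume.restrict I) :=
    hGcont.comp_aestronglyMeasurable (hmeas.const_smul lam)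
  refine Integrable.mono (hpow n) hmeas' (Filter.Eventually.of_forall fun t => ?_)
  have habs : G (lam • du t) = G (|lam| • du t) := by
    rcases abs_choice lam with h | h
    · rw [h]
    · rw [h, neg_smul, hG.2.2.1]
  have hfrac : (0:ℝ) < (2:ℝ)^n := by positivity
  have hkey : G (|lam| • du t) ≤ G ((2:ℝ)^n • du t) := by
    have h1 : |lam| • du t = (|lam| / (2:ℝ)^n) • ((2:ℝ)^n • du t) := by
      rw [smul_smul, div_mul_cancel₀]
      exact ne_of_gt hfrac
    rw [h1]
    have h2 := gfun_smul_le hG (c := |lam| / (2:ℝ)^n)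
      (by positivity) (by rw [div_le_one hfrac]; exact hn) ((2:ℝ)^n • du t)
    have h3 : |lam| / (2:ℝ)^n * G ((2:ℝ)^n • du t) ≤ G ((2:ℝ)^n • du t) := by
      have := hGnn ((2:ℝ)^n • du t)
      nlinarith [div_le_one_of_le₀ hn (le_of_lt hfrac), div_nonneg (abs_nonneg lam) hfrac.le]
    linarith
  have h1 : 0 ≤ G (lam • du t) := hGnn _
  have h2 : 0 ≤ G ((2:ℝ)^n • du t) := hGnn _
  rw [Real.norm_eq_abs, Real.norm_eq_abs, abs_of_nonneg h1, abs_of_nonneg h2, habs]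
  exact hkey

/-- Poincaré inequality ‖u‖_G ≤ (b − a) ‖u̇‖_G for u vanishing at the
endpoints. -/
theorem poincare_inequality {N : ℕ} (hN : 1 ≤ N) (G : Euc N → ℝ) (hG : IsGFunction G)
    (a b : ℝ) (hab : a < b) (u du : ℝ → Euc N)
    (hdu : MemLG G (Icc a b) du) (hint : IntegrableOn du (Icc a b))
    (hu : ∀ t ∈ Icc a b, u t = u a + ∫ s in a..t, du s)
    (hua : u a = 0) (hub : u b = 0) :
    luxNorm G (Icc a b) u ≤ (b - a) * luxNorm G (Icc a b) du := by
  have hba : (0:ℝ) < b - a := sub_pos.mpr hab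
  have hGcont := gfun_continuous hG
  have hGnn := gfun_nonneg hG
  set I : Set ℝ := Icc a b with hI
  have hμI : volume I = ENNReal.ofReal (b - a) := Real.volume_Icc
  have hμI0 : volume I ≠ 0 := by
    rw [hμI]; simp [ENNReal.ofReal_eq_zero]; linarith
  have hμIfin : volume I ≠ ⊤ := by rw [hμI]; exact ENNReal.ofReal_ne_top
  -- representation of u via set integrals
  have hu' : ∀ t ∈ I, u t = ∫ s in Icc a t, du s := by
    intro t ht
    rw [hu t ht, hua, zero_add, intervalIntegral.integral_of_le ht.1,
      ← integral_Icc_eq_integral_Ioc]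
  -- measurability of u on I
  have hucont : ContinuousOn u I := by
    have hp : ContinuousOn (fun t => ∫ s in Icc a t, du s) (Icc a b) :=
      intervalIntegral.continuousOn_primitive_Icc hint
    exact ContinuousOn.congr hp hu'
  have humeas : AEStronglyMeasurable u (volume.restrict I) :=
    hucont.aestronglyMeasurable measurableSet_Icc
  -- integrability of scaled derivative compositions
  have hIntLam : ∀ lam : ℝ, IntegrableOn (fun t => G (lam • du t)) I :=
    gfun_integrable_smul hG measurableSet_Icc hμIfin hdu.1 hdu.2
  -- key membership transfer
  have key : ∀ α : ℝ, 0 < α → (∫ t in I, G (α⁻¹ • du t)) ≤ 1 →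
      (∫ t in I, G (((b-a)*α)⁻¹ • u t)) ≤ 1 := by
    intro α hα hle
    have hvI : IntegrableOn (fun s => α⁻¹ • du s) I := hint.smul α⁻¹
    have hGvI : IntegrableOn (fun s => G (α⁻¹ • du s)) I := hIntLam α⁻¹
    set D : ℝ := (b-a)⁻¹ * ∫ s in I, G (α⁻¹ • du s) with hD
    have hintnn : 0 ≤ ∫ s in I, G (α⁻¹ • du s) :=
      setIntegral_nonneg measurableSet_Icc fun s _ => hGnn _
    have hDnn : 0 ≤ D := mul_nonneg (by positivity) hintnn
    -- pointwise Jensen bound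
    have hpt : ∀ t ∈ I, G (((b-a)*α)⁻¹ • u t) ≤ D := by
      intro t ht
      set w : ℝ → Euc N := (Icc a t).indicator (fun s => α⁻¹ • du s) with hw
      have hsub : Icc a t ⊆ I := Icc_subset_Icc le_rfl ht.2
      have hwint : IntegrableOn w I := hvI.indicator measurableSet_Icc
      have hGw : (fun s => G (w s)) = (Icc a t).indicator (fun s => G (α⁻¹ • du s)) := by
        funext s
        by_cases hs : s ∈ Icc a t <;> simp [hw, indicator, hs, hG.1]
      have hGwint : IntegrableOn (fun s => G (w s)) I := by
        rw [hGw]; exact hGvI.indicator measurableSet_Icc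
      -- compute the average of w
      have hIw : ∫ s in I, w s = α⁻¹ • u t := by
        rw [hw, setIntegral_indicator measurableSet_Icc,
          inter_eq_self_of_subset_right hsub, integral_smul, ← hu' t ht]
      have havg : (⨍ s in I, w s) = ((b-a)*α)⁻¹ • u t := by
        rw [setAverage_eq, measureReal_def, hμI, ENNReal.toReal_ofReal hba.le, hIw, smul_smul,
          ← mul_inv]
      -- Jensen
      have hJ : G (⨍ s in I, w s) ≤ ⨍ s in I, G (w s) := by
        refine hG.2.1.map_set_average_le hGcont.continuousOn isClosed_univ hμI0 hμIfin
          (Filter.Eventually.of_forall fun s => mem_univ _) hwint ?_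
        exact hGwint
      rw [havg] at hJ
      refine hJ.trans ?_
      rw [setAverage_eq, measureReal_def, hμI, ENNReal.toReal_ofReal hba.le, smul_eq_mul]
      rw [hD]
      refine mul_le_mul_of_nonneg_left ?_ (by positivity)
      rw [hGw, setIntegral_indicator measurableSet_Icc,
        inter_eq_self_of_subset_right hsub]
      refine setIntegral_mono_set hGvI
        (Filter.Eventually.of_forall fun s => hGnn _) hsub.eventuallyLE
    -- integrability of the scaled u composition
    have hFmeas : AEStronglyMeasurable (fun t => G (((b-a)*α)⁻¹ • u t))
        (volume.restrict I) :=
      hGcont.comp_aestronglyMeasurable (humeas.const_smul (((b-a)*α)⁻¹))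
    have hFint : IntegrableOn (fun t => G (((b-a)*α)⁻¹ • u t)) I := by
      refine Integrable.mono (integrableOn_const hμIfin :
        IntegrableOn (fun _ => D) I volume) hFmeas ?_
      refine (ae_restrict_iff' measurableSet_Icc).mpr (Filter.Eventually.of_forall fun t ht => ?_)
      rw [Real.norm_eq_abs, Real.norm_eq_abs, abs_of_nonneg (hGnn _), abs_of_nonneg hDnn]
      exact hpt t ht
    calc (∫ t in I, G (((b-a)*α)⁻¹ • u t)) ≤ ∫ _t in I, D :=
          setIntegral_mono_on hFint (integrableOn_const hμIfin)
            measurableSet_Icc hpt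
      _ = (b - a) * D := by
          rw [setIntegral_const, measureReal_def, hμI, ENNReal.toReal_ofReal hba.le, smul_eq_mul]
      _ = ∫ s in I, G (α⁻¹ • du s) := by
          rw [hD]; field_simp
      _ ≤ 1 := hle
  -- the admissible set for du is nonempty
  set Sd : Set ℝ := {α : ℝ | 0 < α ∧ (∫ t in I, G (α⁻¹ • du t)) ≤ 1} with hSd
  set Su : Set ℝ := {α : ℝ | 0 < α ∧ (∫ t in I, G (α⁻¹ • u t)) ≤ 1} with hSu
  have hSdne : Sd.Nonempty := by
    set m : ℝ := ∫ t in I, G (du t) with hm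
    have hmnn : 0 ≤ m := setIntegral_nonneg measurableSet_Icc fun s _ => hGnn _
    have hm1 : (0:ℝ) < m + 1 := by linarith
    refine ⟨m + 1, hm1, ?_⟩
    have hptw : ∀ t, G ((m+1)⁻¹ • du t) ≤ (m+1)⁻¹ * G (du t) := fun t =>
      gfun_smul_le hG (by positivity) (by
        rw [inv_le_one_iff₀]; right; linarith) (du t)
    calc (∫ t in I, G ((m+1)⁻¹ • du t)) ≤ ∫ t in I, (m+1)⁻¹ * G (du t) :=
          setIntegral_mono_on (hIntLam (m+1)⁻¹) (hdu.2.const_mul _)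
            measurableSet_Icc fun t _ => hptw t
      _ = (m+1)⁻¹ * m := by rw [integral_const_mul, ← hm]
      _ ≤ 1 := by
          rw [inv_mul_le_iff₀ hm1]; linarith
  have hSubdd : BddBelow Su := ⟨0, fun x hx => hx.1.le⟩
  have h1 : ∀ α ∈ Sd, sInf Su ≤ (b-a) * α := by
    intro α hα
    exact csInf_le hSubdd ⟨mul_pos hba hα.1, key α hα.1 hα.2⟩
  have h2 : sInf Su / (b-a) ≤ sInf Sd := by
    refine le_csInf hSdne fun α hα => ?_
    rw [div_le_iff₀ hba]
    calc sInf Su ≤ (b-a) * α := h1 α hα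
      _ = α * (b - a) := mul_comm _ _
  rw [div_le_iff₀ hba] at h2
  calc luxNorm G (Icc a b) u = sInf Su := rfl
    _ ≤ sInf Sd * (b - a) := h2
    _ = (b - a) * sInf Sd := mul_comm _ _
    _ = (b - a) * luxNorm G (Icc a b) du := rfl
end
end
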